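/- Fix x ∈ ℝ^d and let g(s,t) := 1/(log(e+t) + log(e+s)). Then the function t ↦ t^{1/2} · g(|x|, t) is increasing on [0, ∞); consequently ∫_0^t g(|x|, s) ds ≤ 2 t · g(|x|, t) for all t ≥ 0. -/
import Mathlib

open Real

noncomputable def gFun (s t : ℝ) : ℝ :=
  1 / (Real.log (Real.exp 1 + t) + Real.log (Real.exp 1 + s))

lemma L_ge_two {a : ℝ} (ha : 1 ≤ a) {t : ℝ} (ht : 0 ≤ t) :
    2 ≤ Real.log (Real.exp 1 + t) + a := by
  have h1 : 1 ≤ Real.log (Real.exp 1 + t) := by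
    rw [Real.le_log_iff_exp_le (by positivity)]
    linarith
  linarith

lemma aux_mono {a : ℝ} (ha : 1 ≤ a) :
    MonotoneOn (fun t : ℝ => Real.sqrt t / (Real.log (Real.exp 1 + t) + a)) (Set.Ici 0) := by
  have hLpos : ∀ t : ℝ, 0 ≤ t → 0 < Real.log (Real.exp 1 + t) + a := fun t ht =>
    lt_of_lt_of_le (by norm_num) (L_ge_two ha ht)
  have hcont : ContinuousOn (fun t : ℝ => Real.sqrt t / (Real.log (Real.exp 1 + t) + a))
      (Set.Ici 0) := by
    apply ContinuousOn.div
    · exact Real.continuous_sqrt.continuousOn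
    · exact ((continuous_const.add continuous_id).continuousOn.log
        (fun t ht => by have : (0:ℝ) < Real.exp 1 + t := by
                          have := Real.exp_pos 1; simp at ht; linarith
                        exact ne_of_gt this)).add continuousOn_const
    · exact fun t ht => ne_of_gt (hLpos t ht)
  have hderiv : ∀ t : ℝ, t ∈ Set.Ioi (0:ℝ) →
      HasDerivAt (fun t : ℝ => Real.sqrt t / (Real.log (Real.exp 1 + t) + a))
        ((1 / (2 * Real.sqrt t) * (Real.log (Real.exp 1 + t) + a)
            - Real.sqrt t * (1 / (Real.exp 1 + t))) / (Real.log (Real.exp 1 + t) + a) ^ 2) t := by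
    intro t ht
    have ht' : (0:ℝ) < t := ht
    have h1 : HasDerivAt Real.sqrt (1 / (2 * Real.sqrt t)) t :=
      Real.hasDerivAt_sqrt (ne_of_gt ht')
    have hpos : (0:ℝ) < Real.exp 1 + t := by have := Real.exp_pos 1; linarith
    have h2 : HasDerivAt (fun t : ℝ => Real.log (Real.exp 1 + t) + a) (1 / (Real.exp 1 + t)) t := by
      have := (((hasDerivAt_id t).const_add (Real.exp 1)).log (ne_of_gt hpos)).add_const a
      simpa [one_div] using this
    exact h1.div h2 (ne_of_gt (hLpos t ht'.le))
  apply monotoneOn_of_deriv_nonneg (convex_Ici 0) hcont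
  · intro t ht
    rw [interior_Ici] at ht
    exact (hderiv t ht).differentiableAt.differentiableWithinAt
  · intro t ht
    rw [interior_Ici] at ht
    rw [(hderiv t ht).deriv]
    have ht' : (0:ℝ) < t := ht
    have hs : 0 < Real.sqrt t := Real.sqrt_pos.mpr ht'
    have hss : Real.sqrt t * Real.sqrt t = t := Real.mul_self_sqrt ht'.le
    have hL : 2 ≤ Real.log (Real.exp 1 + t) + a := L_ge_two ha ht'.le
    have hpos : (0:ℝ) < Real.exp 1 + t := by have := Real.exp_pos 1; linarith
    apply div_nonneg _ (sq_nonneg _)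
    rw [sub_nonneg, div_mul_eq_mul_div, mul_one_div, div_le_div_iff₀ hpos (by positivity)]
    have he := Real.exp_pos 1
    nlinarith

theorem sqrt_mul_g_monotone {d : ℕ} (x : EuclideanSpace ℝ (Fin d)) :
    MonotoneOn (fun t : ℝ => Real.sqrt t * gFun ‖x‖ t) (Set.Ici (0 : ℝ)) ∧
      ∀ t : ℝ, 0 ≤ t → (∫ s in (0:ℝ)..t, gFun ‖x‖ s) ≤ 2 * t * gFun ‖x‖ t := by
  set a := Real.log (Real.exp 1 + ‖x‖) with ha_def
  have ha : 1 ≤ a := by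
    rw [ha_def, Real.le_log_iff_exp_le (by positivity)]
    have := norm_nonneg x; linarith
  have hg_eq : ∀ t : ℝ, Real.sqrt t * gFun ‖x‖ t
      = Real.sqrt t / (Real.log (Real.exp 1 + t) + a) := by
    intro t; rw [gFun, mul_one_div]
  have hmono : MonotoneOn (fun t : ℝ => Real.sqrt t * gFun ‖x‖ t) (Set.Ici (0 : ℝ)) := by
    have := aux_mono ha
    intro s hs t ht hst
    simpa only [hg_eq] using this hs ht hst
  refine ⟨hmono, fun t ht => ?_⟩
  rcases eq_or_lt_of_le ht with h | ht'
  · simp [← h]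
  set c := Real.sqrt t * gFun ‖x‖ t with hc_def
  -- pointwise bound on Ioc 0 t
  have hpt : ∀ s ∈ Set.Ioc (0:ℝ) t, gFun ‖x‖ s ≤ c * s ^ (-(1/2) : ℝ) := by
    intro s hs
    have hs0 : 0 < s := hs.1
    have hkey : Real.sqrt s * gFun ‖x‖ s ≤ c :=
      hmono (le_of_lt hs0) ht hs.2
    have hrs : s ^ (-(1/2) : ℝ) = (Real.sqrt s)⁻¹ := by
      rw [Real.rpow_neg hs0.le, ← Real.sqrt_eq_rpow]
    have hsq : 0 < Real.sqrt s := Real.sqrt_pos.mpr hs0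
    rw [hrs]
    calc gFun ‖x‖ s = Real.sqrt s * gFun ‖x‖ s / Real.sqrt s := by field_simp
      _ ≤ c / Real.sqrt s := div_le_div_of_nonneg_right hkey hsq.le
      _ = c * (Real.sqrt s)⁻¹ := by rw [div_eq_mul_inv]
  -- continuity/integrability of g on [0,t]
  have hLpos : ∀ s : ℝ, 0 ≤ s → 0 < Real.log (Real.exp 1 + s) + a := fun s hs =>
    lt_of_lt_of_le (by norm_num) (L_ge_two ha hs)
  have hgcont : ContinuousOn (gFun ‖x‖) (Set.Icc 0 t) := by
    apply ContinuousOn.div continuousOn_const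
    · exact ((continuous_const.add continuous_id).continuousOn.log
        (fun s hs => by have : (0:ℝ) < Real.exp 1 + s := by
                          have := Real.exp_pos 1; have := hs.1; linarith
                        exact ne_of_gt this)).add continuousOn_const
    · exact fun s hs => ne_of_gt (hLpos s hs.1)
  have hint1 : MeasureTheory.IntegrableOn (gFun ‖x‖) (Set.Ioc 0 t) :=
    (hgcont.integrableOn_Icc).mono_set Set.Ioc_subset_Icc_self
  have hint2 : MeasureTheory.IntegrableOn (fun s : ℝ => c * s ^ (-(1/2) : ℝ)) (Set.Ioc 0 t) :=
    ((intervalIntegral.intervalIntegrable_rpow' (by norm_num)).const_mul c).1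
  have hmono_int : (∫ s in (0:ℝ)..t, gFun ‖x‖ s)
      ≤ ∫ s in (0:ℝ)..t, c * s ^ (-(1/2) : ℝ) := by
    rw [intervalIntegral.integral_of_le ht, intervalIntegral.integral_of_le ht]
    exact MeasureTheory.setIntegral_mono_on hint1 hint2 measurableSet_Ioc hpt
  have hr : (∫ s in (0:ℝ)..t, s ^ (-(1/2) : ℝ)) = 2 * Real.sqrt t := by
    rw [integral_rpow (Or.inl (by norm_num)), Real.sqrt_eq_rpow,
      Real.zero_rpow (by norm_num)]
    norm_num
    ring
  have hval : (∫ s in (0:ℝ)..t, c * s ^ (-(1/2) : ℝ)) = c * (2 * Real.sqrt t) := by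
    rw [intervalIntegral.integral_const_mul, hr]
  have hss : Real.sqrt t * Real.sqrt t = t := Real.mul_self_sqrt ht
  calc (∫ s in (0:ℝ)..t, gFun ‖x‖ s) ≤ c * (2 * Real.sqrt t) := hmono_int.trans hval.le
    _ = 2 * t * gFun ‖x‖ t := by
        rw [hc_def, show Real.sqrt t * gFun ‖x‖ t * (2 * Real.sqrt t)
          = 2 * (Real.sqrt t * Real.sqrt t) * gFun ‖x‖ t from by ring, hss]
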